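/- (Lemma 1, phase alignment) Let N ≥ 1, let λ ∈ ℝ^N with λ_n > 0 for all n, let b ∈ ℂ^N be nonzero, and let ε > 0. Suppose v⋆ ∈ ℂ^N minimizes ∑_{n=1}^N λ_n |v_n|² over the set {v ∈ ℂ^N : Im[v^H b] = 0 and Re[v^H b] ≥ ε‖v‖₂ + 1}. Then for every n, conj(v⋆_n)·b_n is a nonnegative real number; equivalently, v⋆_n = |v⋆_n|·exp(j·arg(b_n)) for every n with b_n ≠ 0, and in particular (v⋆)^H b = ∑_{n=1}^N |v⋆_n|·|b_n|. -/

import Mathlib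

open Complex Finset


/-- Lemma 1, phase alignment: if `v⋆` minimizes `∑ λ_n |v_n|²`
over `{v : Im[v^H b] = 0, Re[v^H b] ≥ ε‖v‖₂ + 1}` (with `λ > 0`, `b ≠ 0`, `ε > 0`),
then each `conj(v⋆_n)·b_n` is a nonnegative real, `v⋆_n = |v⋆_n|·exp(j·arg b_n)`
whenever `b_n ≠ 0`, and `(v⋆)^H b = ∑ |v⋆_n|·|b_n|`. -/
theorem rab_phase_alignment (N : ℕ) (hN : 1 ≤ N)
    (lam : Fin N → ℝ) (hlam : ∀ n, 0 < lam n)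
    (b : EuclideanSpace ℂ (Fin N)) (hb : b ≠ 0) (ε : ℝ) (hε : 0 < ε)
    (vstar : EuclideanSpace ℂ (Fin N))
    (hfeas : (inner ℂ vstar b : ℂ).im = 0 ∧ ε * ‖vstar‖ + 1 ≤ (inner ℂ vstar b : ℂ).re)
    (hopt : ∀ v : EuclideanSpace ℂ (Fin N),
      (inner ℂ v b : ℂ).im = 0 → ε * ‖v‖ + 1 ≤ (inner ℂ v b : ℂ).re →
      ∑ n, lam n * ‖vstar n‖ ^ 2 ≤ ∑ n, lam n * ‖v n‖ ^ 2) :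
    (∀ n, ((starRingEnd ℂ) (vstar n) * b n).im = 0 ∧
          0 ≤ ((starRingEnd ℂ) (vstar n) * b n).re) ∧
    (∀ n, b n ≠ 0 →
      vstar n = (‖vstar n‖ : ℂ) * Complex.exp (((b n).arg : ℂ) * Complex.I)) ∧
    (inner ℂ vstar b : ℂ) = ((∑ n, ‖vstar n‖ * ‖b n‖ : ℝ) : ℂ) := by
  obtain ⟨him, hre⟩ := hfeas
  classical
  have hinner : ∀ x y : EuclideanSpace ℂ (Fin N),
      (inner ℂ x y : ℂ) = ∑ n, (starRingEnd ℂ) (x n) * y n := by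
    intro x y; simp [PiLp.inner_apply, RCLike.inner_apply, mul_comm]
  set S : ℝ := ∑ n, ‖vstar n‖ * ‖b n‖ with hSdef
  have hterm : ∀ n, ((starRingEnd ℂ) (vstar n) * b n).re
      ≤ ‖vstar n‖ * ‖b n‖ := by
    intro n
    calc ((starRingEnd ℂ) (vstar n) * b n).re
        ≤ ‖(starRingEnd ℂ) (vstar n) * b n‖ := Complex.re_le_norm _
      _ = ‖vstar n‖ * ‖b n‖ := by
          rw [norm_mul, Complex.norm_conj]
  have hre_sum : (inner ℂ vstar b : ℂ).re = ∑ n, ((starRingEnd ℂ) (vstar n) * b n).re := by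
    rw [hinner, Complex.re_sum]
  have hSle : (inner ℂ vstar b : ℂ).re ≤ S := by
    rw [hre_sum]; exact Finset.sum_le_sum (fun n _ => hterm n)
  have hv0 : vstar ≠ 0 := by
    intro h
    rw [h] at hre
    simp at hre
    linarith [norm_nonneg (0 : EuclideanSpace ℂ (Fin N))]
  -- the main equality
  have hmain : (inner ℂ vstar b : ℂ).re = S := by
    by_contra hne
    have hlt : (inner ℂ vstar b : ℂ).re < S := lt_of_le_of_ne hSle hne
    have hS1 : ε * ‖vstar‖ + 1 < S := lt_of_le_of_lt hre hlt
    set c : ℝ := S - ε * ‖vstar‖ with hc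
    have hc1 : 1 < c := by rw [hc]; linarith
    have hc0 : 0 < c := by linarith
    set t : ℝ := 1 / c with ht
    have ht0 : 0 < t := by positivity
    have ht1 : t < 1 := by rw [ht]; exact (div_lt_one hc0).mpr hc1
    have htc : t * c = 1 := by rw [ht]; field_simp
    set w : EuclideanSpace ℂ (Fin N) :=
      WithLp.toLp 2 (fun n => (t : ℂ) * ((‖vstar n‖ : ℂ)
        * Complex.exp (((b n).arg : ℂ) * Complex.I))) with hw
    have hwn : ∀ n, (starRingEnd ℂ) (w n) * b n
        = ((t * (‖vstar n‖ * ‖b n‖) : ℝ) : ℂ) := by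
      intro n
      have h1 : (starRingEnd ℂ) (Complex.exp (((b n).arg : ℂ) * Complex.I))
          = Complex.exp (-(((b n).arg : ℂ) * Complex.I)) := by
        rw [← Complex.exp_conj]
        congr 1
        simp [Complex.conj_I, Complex.conj_ofReal]
      have h2 : Complex.exp (-(((b n).arg : ℂ) * Complex.I)) * b n
          = (‖b n‖ : ℂ) := by
        have habs := Complex.norm_mul_exp_arg_mul_I (b n)
        nth_rewrite 2 [← habs]
        rw [mul_comm ((‖b n‖) : ℂ), ← mul_assoc, ← Complex.exp_add,
          neg_add_cancel, Complex.exp_zero, one_mul]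
      simp only [hw, PiLp.toLp_apply, map_mul, Complex.conj_ofReal, h1]
      push_cast
      rw [mul_assoc, mul_assoc, h2]
    have hwnorm : ∀ n, ‖w n‖ = t * ‖vstar n‖ := by
      intro n
      simp only [hw, PiLp.toLp_apply, norm_mul, Complex.norm_real, Real.norm_eq_abs, Complex.norm_exp_ofReal_mul_I, mul_one,
        abs_of_pos ht0, _root_.abs_of_nonneg (norm_nonneg (vstar n))]
    have hinnerw : (inner ℂ w b : ℂ) = ((t * S : ℝ) : ℂ) := by
      rw [hinner]
      simp only [hwn]
      rw [← Complex.ofReal_sum]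
      congr 1
      rw [hSdef, Finset.mul_sum]
    have hnormw : ‖w‖ = t * ‖vstar‖ := by
      rw [EuclideanSpace.norm_eq, EuclideanSpace.norm_eq]
      simp only [hwnorm, mul_pow]
      rw [← Finset.mul_sum, Real.sqrt_mul (sq_nonneg t), Real.sqrt_sq ht0.le]
    have hfeas1 : (inner ℂ w b : ℂ).im = 0 := by rw [hinnerw]; simp
    have hfeas2 : ε * ‖w‖ + 1 ≤ (inner ℂ w b : ℂ).re := by
      rw [hinnerw, hnormw]
      simp only [Complex.ofReal_re]
      have : t * S = t * (ε * ‖vstar‖) + t * c := by rw [hc]; ring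
      rw [this, htc]
      linarith
    have hle := hopt w hfeas1 hfeas2
    have hwval : ∑ n, lam n * ‖w n‖ ^ 2
        = t ^ 2 * ∑ n, lam n * ‖vstar n‖ ^ 2 := by
      rw [Finset.mul_sum]
      exact Finset.sum_congr rfl (fun n _ => by rw [hwnorm]; ring)
    rw [hwval] at hle
    have hP : 0 < ∑ n, lam n * ‖vstar n‖ ^ 2 := by
      have hex : ∃ n, vstar n ≠ 0 := by
        by_contra h
        push_neg at h
        exact hv0 (PiLp.ext h)
      obtain ⟨n, hn⟩ := hex
      refine Finset.sum_pos' (fun i _ => mul_nonneg (hlam i).le (sq_nonneg _))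
        ⟨n, Finset.mem_univ n, ?_⟩
      exact mul_pos (hlam n) (pow_pos (norm_pos_iff.mpr hn) 2)
    have ht2 : t ^ 2 < 1 := by nlinarith
    nlinarith [mul_lt_mul_of_pos_right ht2 hP]
  -- termwise equality
  have htermeq : ∀ n, ((starRingEnd ℂ) (vstar n) * b n).re
      = ‖vstar n‖ * ‖b n‖ := by
    have hsum : ∑ n, ((starRingEnd ℂ) (vstar n) * b n).re
        = ∑ n, ‖vstar n‖ * ‖b n‖ := by
      rw [← hre_sum, hmain]
    intro n
    exact (Finset.sum_eq_sum_iff_of_le (fun i _ => hterm i)).mp hsum n (Finset.mem_univ n)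
  have habseq : ∀ n, ((starRingEnd ℂ) (vstar n) * b n).re
      = ‖(starRingEnd ℂ) (vstar n) * b n‖ := by
    intro n; rw [htermeq n, norm_mul, Complex.norm_conj]
  have him0 : ∀ n, ((starRingEnd ℂ) (vstar n) * b n).im = 0 := by
    intro n
    have h2 := Complex.sq_norm ((starRingEnd ℂ) (vstar n) * b n)
    rw [Complex.normSq_apply, ← habseq n] at h2
    have : ((starRingEnd ℂ) (vstar n) * b n).im * ((starRingEnd ℂ) (vstar n) * b n).im = 0 := by
      nlinarith
    exact mul_self_eq_zero.mp this
  refine ⟨fun n => ⟨him0 n, ?_⟩, fun n hbn => ?_, ?_⟩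
  · rw [habseq n]; exact norm_nonneg _
  · -- phase alignment
    have hbne : ‖b n‖ ≠ 0 := norm_ne_zero_iff.mpr hbn
    have heq : (starRingEnd ℂ) (vstar n) * b n
        = ((‖vstar n‖ * ‖b n‖ : ℝ) : ℂ) := by
      apply Complex.ext
      · simp [htermeq n]
      · simp [him0 n]
    have hconj : vstar n * (starRingEnd ℂ) (b n)
        = ((‖vstar n‖ * ‖b n‖ : ℝ) : ℂ) := by
      have := congrArg (starRingEnd ℂ) heq
      simpa [map_mul, Complex.conj_conj, Complex.conj_ofReal, mul_comm] using this
    have hexp : Complex.exp (((b n).arg : ℂ) * Complex.I)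
        = b n / (‖b n‖ : ℂ) := by
      rw [eq_div_iff (by exact_mod_cast hbne), mul_comm]
      exact Complex.norm_mul_exp_arg_mul_I (b n)
    rw [hexp]
    have hcne : (starRingEnd ℂ) (b n) ≠ 0 := by
      simpa using hbn
    apply mul_right_cancel₀ hcne
    rw [hconj]
    have hbc : b n * (starRingEnd ℂ) (b n) = ((‖b n‖ ^ 2 : ℝ) : ℂ) := by
      rw [Complex.mul_conj, Complex.normSq_eq_norm_sq]
    have hbC : ((‖b n‖) : ℂ) ≠ 0 := by exact_mod_cast hbne
    rw [mul_assoc, div_mul_eq_mul_div, hbc]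
    push_cast
    field_simp
  · apply Complex.ext
    · simp only [Complex.ofReal_re]; exact hmain
    · simp only [Complex.ofReal_im]; exact him
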